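/- arXiv:math/9901017 — 6 statements merged into one kernel-verified Lean document; each statement's English description precedes it below -/
import Mathlib

section
/- The intersection of a pre-I-open set with an open set is pre-I-open. -/
open Set

variable {X : Type*}

def LocalFun [TopologicalSpace X] (I : Set (Set X)) (A : Set X) : Set X :=
  {x | ∀ U : Set X, IsOpen U → x ∈ U → U ∩ A ∉ I}

def IsSetIdeal {X : Type*} (I : Set (Set X)) : Prop :=
  ∅ ∈ I ∧ (∀ ⦃A B : Set X⦄, A ∈ I → B ⊆ A → B ∈ I) ∧
    ∀ ⦃A B : Set X⦄, A ∈ I → B ∈ I → A ∪ B ∈ I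

theorem preIOpen_inter_open [TopologicalSpace X] (I : Set (Set X)) (hI : IsSetIdeal I)
    (A U : Set X) (hA : A ⊆ interior (A ∪ LocalFun I A)) (hU : IsOpen U) :
    A ∩ U ⊆ interior ((A ∩ U) ∪ LocalFun I (A ∩ U)) := by
  intro x ⟨hxA, hxU⟩
  have key : (interior (A ∪ LocalFun I A)) ∩ U ⊆ interior ((A ∩ U) ∪ LocalFun I (A ∩ U)) := by
    have hopen : IsOpen ((interior (A ∪ LocalFun I A)) ∩ U) := isOpen_interior.inter hU
    rw [← hopen.interior_eq]
    apply interior_mono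
    intro y ⟨hy1, hy2⟩
    have hy1' := interior_subset hy1
    rcases hy1' with h | h
    · exact Or.inl ⟨h, hy2⟩
    · refine Or.inr fun V hV hyV hmem => ?_
      have := h (V ∩ U) (hV.inter hU) ⟨hyV, hy2⟩
      apply this
      apply hI.2.1 hmem
      intro z ⟨⟨hz1, hz2⟩, hz3⟩
      exact ⟨hz1, hz3, hz2⟩
  exact key ⟨hA hxA, hxU⟩
end

section
/- If (X,τ) is submaximal, then for any ideal I on X, the pre-I-open sets are exactly the open sets. -/
open Set

variable {X : Type*}

theorem submaximal_preIOpen_eq_open [TopologicalSpace X]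
    (hsub : ∀ D : Set X, Dense D → IsOpen D) (I : Set (Set X)) (hI : IsSetIdeal I)
    (A : Set X) : A ⊆ interior (A ∪ LocalFun I A) ↔ IsOpen A := by
  constructor
  · intro h
    -- LocalFun I A ⊆ closure A
    have hloc : LocalFun I A ⊆ closure A := by
      intro x hx
      rw [mem_closure_iff]
      intro U hU hxU
      have h2 := hx U hU hxU
      rw [nonempty_iff_ne_empty]
      intro hempty
      exact h2 (hempty ▸ hI.1)
    have hpre : A ⊆ interior (closure A) :=
      h.trans (interior_mono (union_subset subset_closure hloc))
    -- D = A ∪ (closure A)ᶜ is dense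
    have hD : Dense (A ∪ (closure A)ᶜ) := by
      intro x
      by_cases hx : x ∈ closure A
      · exact closure_mono subset_union_left hx
      · exact subset_closure (Or.inr hx)
    have hDopen := hsub _ hD
    have : A = (A ∪ (closure A)ᶜ) ∩ interior (closure A) := by
      apply Subset.antisymm
      · exact subset_inter subset_union_left hpre
      · rintro x ⟨hx1 | hx1, hx2⟩
        · exact hx1
        · exact absurd (interior_subset hx2) hx1
    rw [this]
    exact hDopen.inter isOpen_interior
  · intro h
    exact interior_maximal subset_union_left h
end

section
/- A set A is I-open if and only if A is pre-I-open and ⋆-dense-in-itself (i.e. A ⊆ A*). -/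
open Set

variable {X : Type*}

theorem iOpen_iff_preIOpen_and_starDense [TopologicalSpace X] (I : Set (Set X))
    (A : Set X) : A ⊆ interior (LocalFun I A) ↔
      (A ⊆ interior (A ∪ LocalFun I A) ∧ A ⊆ LocalFun I A) := by
  constructor
  · intro h
    exact ⟨h.trans (interior_mono subset_union_right),
      h.trans interior_subset⟩
  · rintro ⟨h1, h2⟩
    rwa [union_eq_self_of_subset_left h2] at h1
end

section
/- A function f : X → Y between topological spaces (with an ideal I on X) is I-continuous if and only if it is pre-I-continuous and ⋆-I-continuous. -/
open Set

variable {X : Type*}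

theorem iContinuous_iff {Y : Type*} [TopologicalSpace X] [TopologicalSpace Y]
    (I : Set (Set X)) (f : X → Y) :
    (∀ V : Set Y, IsOpen V → f ⁻¹' V ⊆ interior (LocalFun I (f ⁻¹' V))) ↔
      ((∀ V : Set Y, IsOpen V →
          f ⁻¹' V ⊆ interior (f ⁻¹' V ∪ LocalFun I (f ⁻¹' V))) ∧
        (∀ V : Set Y, IsOpen V → f ⁻¹' V ⊆ LocalFun I (f ⁻¹' V))) := by
  constructor
  · intro h
    have hsub : ∀ V : Set Y, IsOpen V → f ⁻¹' V ⊆ LocalFun I (f ⁻¹' V) := fun V hV =>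
      (h V hV).trans interior_subset
    refine ⟨fun V hV => (h V hV).trans (interior_mono subset_union_right), hsub⟩
  · rintro ⟨h1, h2⟩ V hV
    have : f ⁻¹' V ∪ LocalFun I (f ⁻¹' V) = LocalFun I (f ⁻¹' V) :=
      union_eq_right.mpr (h2 V hV)
    simpa [this] using h1 V hV
end

section
/- In a Hayashi–Samuels space (X = X*), a subset A is open if and only if A is pre-I-open and I-locally closed. -/
open Set

variable {X : Type*}

theorem open_iff_preIOpen_and_ILocallyClosed [TopologicalSpace X] (I : Set (Set X))
    (hI : IsSetIdeal I) (hHS : LocalFun I (Set.univ : Set X) = Set.univ) (A : Set X) :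
    IsOpen A ↔
      (A ⊆ interior (A ∪ LocalFun I A) ∧
        ∃ U V : Set X, IsOpen U ∧ LocalFun I V = V ∧ A = U ∩ V) := by
  constructor
  · intro hA
    refine ⟨?_, A, univ, hA, hHS, (inter_univ A).symm⟩
    calc A ⊆ interior A := hA.subset_interior_iff.mpr Subset.rfl
      _ ⊆ _ := interior_mono subset_union_left
  · rintro ⟨hpre, U, V, hU, hV, rfl⟩
    have hmono : LocalFun I (U ∩ V) ⊆ LocalFun I V := by
      intro x hx W hW hxW hWV
      exact hx W hW hxW (hI.2.1 hWV (inter_subset_inter_right W inter_subset_right))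
    have key : U ∩ V = U ∩ interior (U ∩ V ∪ LocalFun I (U ∩ V)) := by
      apply Subset.antisymm
      · exact subset_inter inter_subset_left hpre
      · rintro x ⟨hxU, hxi⟩
        rcases interior_subset hxi with h | h
        · exact h
        · exact ⟨hxU, hV ▸ hmono h⟩
    rw [key]
    exact hU.inter isOpen_interior
end

section
/- In a Hayashi–Samuels space, a function f : X → Y is continuous if and only if it is pre-I-continuous and I-LC-continuous. -/
open Set

variable {X : Type*}

theorem continuous_iff_preICont_and_ILCCont {Y : Type*} [TopologicalSpace X]
    [TopologicalSpace Y] (I : Set (Set X)) (hI : IsSetIdeal I)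
    (hHS : LocalFun I (Set.univ : Set X) = Set.univ) (f : X → Y) :
    Continuous f ↔
      ((∀ V : Set Y, IsOpen V →
          f ⁻¹' V ⊆ interior (f ⁻¹' V ∪ LocalFun I (f ⁻¹' V))) ∧
        (∀ V : Set Y, IsOpen V →
          ∃ U W : Set X, IsOpen U ∧ LocalFun I W = W ∧ f ⁻¹' V = U ∩ W)) := by
  have mono : ∀ A B : Set X, A ⊆ B → LocalFun I A ⊆ LocalFun I B := by
    intro A B hAB x hx U hU hxU hUB
    exact hx U hU hxU (hI.2.1 hUB (inter_subset_inter_right U hAB))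
  constructor
  · intro hf
    constructor
    · intro V hV
      have : f ⁻¹' V ⊆ interior (f ⁻¹' V) := (hV.preimage hf).subset_interior_iff.mpr subset_rfl
      exact this.trans (interior_mono subset_union_left)
    · intro V hV
      exact ⟨f ⁻¹' V, univ, hV.preimage hf, hHS, (inter_univ _).symm⟩
  · rintro ⟨hpre, hlc⟩
    rw [continuous_def]
    intro V hV
    obtain ⟨U, W, hU, hW, hVUW⟩ := hlc V hV
    have hsub : LocalFun I (f ⁻¹' V) ⊆ W := by
      rw [hVUW]
      exact (mono _ _ inter_subset_right).trans hW.subset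
    rw [← subset_interior_iff_isOpen]
    intro x hx
    have hx' := hpre V hV hx
    have hopen : IsOpen (U ∩ interior (f ⁻¹' V ∪ LocalFun I (f ⁻¹' V))) :=
      hU.inter isOpen_interior
    have hinc : U ∩ interior (f ⁻¹' V ∪ LocalFun I (f ⁻¹' V)) ⊆ f ⁻¹' V := by
      intro y ⟨hyU, hyI⟩
      rcases interior_subset hyI with h | h
      · exact h
      · rw [hVUW]; exact ⟨hyU, hsub h⟩
    refine interior_maximal hinc hopen ⟨?_, hx'⟩
    rw [hVUW] at hx; exact hx.1
end
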